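/- Let X be a compact metric space, F : X → X a continuous map, and U ⊆ X an open set with F '' (closure U) ⊆ U. Let Λ = ⋂_{n≥0} F^[n] '' (closure U). Then every point u ∈ U with u ∉ Λ is wandering for F. (Points of a trapping region not on the maximal attractor are wandering; in particular, all points of the basin of a sink other than the periodic orbit itself are wandering.) -/

import Mathlib

open Set Function Filter Topology

/-- `x` is a wandering point of `F`. -/
def IsWandering {X : Type*} [TopologicalSpace X] (F : X → X) (x : X) : Prop :=
  ∃ V : Set X, IsOpen V ∧ x ∈ V ∧ ∀ n : ℕ, 1 ≤ n → (F^[n] '' V) ∩ V = ∅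

/-- Points of a trapping region that are not on the maximal attractor are wandering. -/
theorem stmt6 {X : Type*} [MetricSpace X] [CompactSpace X]
    (F : X → X) (hF : Continuous F)
    (U : Set X) (hU : IsOpen U) (htrap : F '' closure U ⊆ U) :
    ∀ u ∈ U, u ∉ (⋂ n : ℕ, F^[n] '' closure U) → IsWandering F u := by
  intro u hu hΛ
  simp only [mem_iInter, not_forall] at hΛ
  obtain ⟨N, hN⟩ := hΛ
  -- images of closure U stay in closure U
  have hsub : ∀ k : ℕ, F^[k] '' closure U ⊆ closure U := by
    intro k
    induction k with
    | zero => simp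
    | succ k ih =>
      rw [Function.iterate_succ, image_comp]
      exact (image_mono ((htrap.trans subset_closure))).trans ih
  have hmono : ∀ m n : ℕ, m ≤ n → F^[n] '' closure U ⊆ F^[m] '' closure U := by
    intro m n hmn
    obtain ⟨k, rfl⟩ := Nat.exists_eq_add_of_le hmn
    rw [Function.iterate_add, image_comp]
    exact image_mono (hsub k)
  -- u is not periodic
  have hnp : ∀ n : ℕ, 1 ≤ n → F^[n] u ≠ u := by
    intro n hn hper
    apply hN
    have hiter : ∀ k : ℕ, F^[k * n] u = u := by
      intro k
      induction k with
      | zero => simp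
      | succ k ih =>
        rw [Nat.succ_mul, Function.iterate_add_apply, hper]  -- careful
        exact ih
    have hkn : N ≤ N * n := Nat.le_mul_of_pos_right N hn
    refine hmono N (N * n) hkn ?_
    exact ⟨u, subset_closure hu, hiter N⟩
  -- separating neighborhoods
  have hsep : ∀ n : ℕ, ∃ W : Set X, IsOpen W ∧ u ∈ W ∧
      (1 ≤ n → (F^[n] '' W) ∩ W = ∅) := by
    intro n
    rcases Nat.eq_zero_or_pos n with h0 | h1
    · exact ⟨univ, isOpen_univ, mem_univ u, fun h => by omega⟩
    · obtain ⟨A, B, hA, hB, hAu, hBu, hAB⟩ := t2_separation (hnp n h1)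
      refine ⟨B ∩ F^[n] ⁻¹' A, hB.inter (hA.preimage (hF.iterate n)),
        ⟨hBu, hAu⟩, fun _ => ?_⟩
      apply eq_empty_of_subset_empty
      rintro x ⟨⟨y, hy, rfl⟩, hxB, -⟩
      exact absurd (hAB.ne_of_mem hy.2 hxB) (fun h => h rfl)
  choose W hWopen hWu hWdisj using hsep
  -- the wandering neighborhood
  set K : Set X := F^[N] '' closure U with hK
  have hKcl : IsClosed K :=
    ((isClosed_closure.isCompact).image (hF.iterate N)).isClosed
  refine ⟨(U \ K) ∩ ⋂ n ∈ Finset.range N, W n, ?_, ?_, ?_⟩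
  · exact (hU.sdiff hKcl).inter (isOpen_biInter_finset fun n _ => hWopen n)
  · exact ⟨⟨hu, hN⟩, mem_iInter₂.2 fun n _ => hWu n⟩
  · intro n hn
    rcases lt_or_ge n N with hlt | hge
    · apply eq_empty_of_subset_empty
      rintro x ⟨⟨y, hy, rfl⟩, hx⟩
      have hyW : y ∈ W n := mem_iInter₂.1 hy.2 n (Finset.mem_range.2 hlt)
      have hxW : F^[n] y ∈ W n := mem_iInter₂.1 hx.2 n (Finset.mem_range.2 hlt)
      have hmem : F^[n] y ∈ (F^[n] '' W n) ∩ W n := ⟨⟨y, hyW, rfl⟩, hxW⟩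
      rw [hWdisj n hn] at hmem
      exact hmem
    · apply eq_empty_of_subset_empty
      rintro x ⟨⟨y, hy, rfl⟩, hx⟩
      have : F^[n] y ∈ K := hmono N n hge ⟨y, subset_closure hy.1.1, rfl⟩
      exact hx.1.2 this
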